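/- Let G ∈ ℝ^{N×N} be symmetric and suppose G has a (real) eigenvalue λ < 0. Fix t₀ > 0. Then for every δ > 0 there exists an initial condition (q(t₀), q'(t₀)) with ‖q(t₀)‖₂ + ‖q'(t₀)‖₂ < δ such that the trajectory of the NAGD game dynamics q''(t) + (3/t) q'(t) + G q(t) = 0 satisfies ‖q(t)‖₂ → ∞ exponentially: for every μ' < √(−λ), e^{-μ' t} ‖q(t)‖₂ → ∞ as t → ∞. -/

import Mathlib

open Topology


open Filter

/-- The Euclidean norm `‖x‖₂` of a vector `x ∈ ℝ^N`. -/
noncomputable def e2norm {N : ℕ} (x : Fin N → ℝ) : ℝ := Real.sqrt (∑ i, x i ^ 2)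

/-- NAGD game dynamics: `q` is a twice continuously differentiable trajectory with
velocity `v = q'` satisfying `q'' + (3/t) q' + G q = 0` on `[t₀, ∞)`. -/
def IsNAGDTrajectory {N : ℕ} (G : Matrix (Fin N) (Fin N) ℝ) (t₀ : ℝ)
    (q v : ℝ → Fin N → ℝ) : Prop :=
  (∀ t, t₀ ≤ t → HasDerivAt q (v t) t) ∧
  (∀ t, t₀ ≤ t → HasDerivAt v (-(3 / t) • v t - G.mulVec (q t)) t)

namespace Stmt8Aux

/-- Coefficients of the Bessel-type series. -/
noncomputable def aa (c : ℝ) (k : ℕ) : ℝ :=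
  c ^ k / (4 ^ k * (Nat.factorial k) * (Nat.factorial (k + 1)))

lemma aa_pos {c : ℝ} (hc : 0 < c) (k : ℕ) : 0 < aa c k := by
  unfold aa
  positivity

lemma aa_succ (c : ℝ) (k : ℕ) :
    aa c (k + 1) * (4 * (k + 1) * (k + 2)) = c * aa c k := by
  unfold aa
  rw [Nat.factorial_succ (k + 1), Nat.factorial_succ k]
  have h1 : (Nat.factorial k : ℝ) ≠ 0 := Nat.cast_ne_zero.2 (Nat.factorial_ne_zero k)
  have h2 : (Nat.factorial (k + 1) : ℝ) ≠ 0 := Nat.cast_ne_zero.2 (Nat.factorial_ne_zero _)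
  have h3 : ((k : ℝ) + 1) ≠ 0 := by positivity
  have h4 : ((k : ℝ) + 2) ≠ 0 := by positivity
  push_cast
  field_simp
  ring

/-- The master bound sequence. -/
noncomputable def mb (c R : ℝ) (k : ℕ) : ℝ :=
  aa c k * (2 * (k : ℝ) + 2) ^ 2 * R ^ (2 * k)

lemma mb_pos {c R : ℝ} (hc : 0 < c) (hR : 1 ≤ R) (k : ℕ) : 0 < mb c R k := by
  have := aa_pos hc k
  have : (0:ℝ) < R := lt_of_lt_of_le one_pos hR
  unfold mb
  have := aa_pos hc k
  positivity

lemma summable_mb {c R : ℝ} (hc : 0 < c) (hR : 1 ≤ R) : Summable (mb c R) := by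
  have hR0 : (0:ℝ) < R := lt_of_lt_of_le one_pos hR
  apply summable_of_ratio_norm_eventually_le (r := 1/2) (by norm_num)
  filter_upwards [eventually_ge_atTop (⌈c * R ^ 2⌉₊)] with k hk
  have hk' : c * R ^ 2 ≤ (k : ℝ) := le_trans (Nat.le_ceil _) (by exact_mod_cast hk)
  have hpos := mb_pos hc hR k
  have hpos' := mb_pos hc hR (k + 1)
  rw [Real.norm_eq_abs, Real.norm_eq_abs, abs_of_pos hpos', abs_of_pos hpos]
  -- mb c R (k+1) = aa c (k+1) * (2k+4)^2 * R^(2k+2)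
  have hsucc := aa_succ c k
  have haak := aa_pos hc k
  have haak1 := aa_pos hc (k + 1)
  have hRk : (0:ℝ) < R ^ (2 * k) := by positivity
  unfold mb
  have hexp : 2 * (k + 1) = 2 * k + 2 := by ring
  rw [hexp, pow_add]
  push_cast
  set A := aa c (k + 1) with hA
  set B := aa c k with hB
  set P := R ^ (2 * k) with hP
  have hS : (0:ℝ) < R ^ 2 := by positivity
  have h4k : (0:ℝ) < 4 * ((k:ℝ) + 1) := by positivity
  apply le_of_mul_le_mul_right _ h4k
  have key : A * (2 * ((k:ℝ) + 1) + 2) ^ 2 * (P * R ^ 2) * (4 * ((k:ℝ) + 1))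
      = (A * (4 * ((k:ℝ) + 1) * ((k:ℝ) + 2))) * (4 * ((k:ℝ) + 2)) * (P * R ^ 2) := by ring
  rw [key, hsucc]
  have hBP : (0:ℝ) < B * P := mul_pos haak hRk
  have h5 : c * R ^ 2 * ((k:ℝ) + 2) ≤ (k:ℝ) * ((k:ℝ) + 2) :=
    mul_le_mul_of_nonneg_right hk' (by positivity)
  have h6 : (k:ℝ) * ((k:ℝ) + 2) ≤ 2 * ((k:ℝ) + 1) ^ 3 := by
    have hx : (0:ℝ) ≤ (k:ℝ) := Nat.cast_nonneg k
    nlinarith [mul_nonneg (mul_nonneg hx hx) hx, sq_nonneg ((k:ℝ))]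
  have h7 : c * R ^ 2 * ((k:ℝ) + 2) ≤ 2 * ((k:ℝ) + 1) ^ 3 := h5.trans h6
  have h8 := mul_le_mul_of_nonneg_right h7 hBP.le
  nlinarith [h8]


/-- The solution function and its first two derivatives. -/
noncomputable def ff (c : ℝ) (t : ℝ) : ℝ := ∑' k, aa c k * t ^ (2 * k)

noncomputable def dd1 (c : ℝ) (t : ℝ) : ℝ :=
  ∑' k, aa c k * ((2 * k : ℕ) * t ^ (2 * k - 1))

noncomputable def dd2 (c : ℝ) (t : ℝ) : ℝ :=
  ∑' k, aa c k * ((2 * k : ℕ) * ((2 * k - 1 : ℕ) * t ^ (2 * k - 2)))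

lemma abs_pow_le {t R : ℝ} (hR : 1 ≤ R) (ht : |t| ≤ R) {m n : ℕ} (h : m ≤ n) :
    |t ^ m| ≤ R ^ n := by
  rw [abs_pow]
  calc |t| ^ m ≤ R ^ m := pow_le_pow_left₀ (abs_nonneg t) ht m
    _ ≤ R ^ n := pow_le_pow_right₀ hR h
-- note: careful with names, fix below if needed

lemma bound1 {c t R : ℝ} (hc : 0 < c) (hR : 1 ≤ R) (ht : |t| ≤ R) (k : ℕ) :
    ‖aa c k * t ^ (2 * k)‖ ≤ mb c R k := by
  have ha := aa_pos hc k
  rw [Real.norm_eq_abs, abs_mul, abs_of_pos ha]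
  unfold mb
  have h1 : |t ^ (2 * k)| ≤ R ^ (2 * k) := abs_pow_le hR ht le_rfl
  have h2 : (1:ℝ) ≤ (2 * (k:ℝ) + 2) ^ 2 := by nlinarith [Nat.cast_nonneg (α := ℝ) k]
  have hRn : (0:ℝ) ≤ R ^ (2*k) := by positivity
  calc aa c k * |t ^ (2 * k)| ≤ aa c k * R ^ (2 * k) := by
        exact mul_le_mul_of_nonneg_left h1 ha.le
    _ ≤ (aa c k * R ^ (2 * k)) * (2 * (k:ℝ) + 2) ^ 2 :=
        le_mul_of_one_le_right (by positivity) h2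
    _ = aa c k * (2 * (k:ℝ) + 2) ^ 2 * R ^ (2 * k) := by ring
    _ = mb c R k := rfl

lemma bound2 {c t R : ℝ} (hc : 0 < c) (hR : 1 ≤ R) (ht : |t| ≤ R) (k : ℕ) :
    ‖aa c k * ((2 * k : ℕ) * t ^ (2 * k - 1))‖ ≤ mb c R k := by
  have ha := aa_pos hc k
  rw [Real.norm_eq_abs, abs_mul, abs_of_pos ha, abs_mul, Nat.abs_cast]
  unfold mb
  have h1 : |t ^ (2 * k - 1)| ≤ R ^ (2 * k) := abs_pow_le hR ht (Nat.sub_le _ _)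
  have h2 : ((2 * k : ℕ) : ℝ) ≤ (2 * (k:ℝ) + 2) ^ 2 := by
    push_cast; nlinarith [Nat.cast_nonneg (α := ℝ) k]
  have hRn : (0:ℝ) ≤ R ^ (2*k) := by positivity
  have h3 : ((2 * k : ℕ) : ℝ) * |t ^ (2 * k - 1)| ≤ (2 * (k:ℝ) + 2) ^ 2 * R ^ (2 * k) := by
    apply mul_le_mul h2 h1 (abs_nonneg _) (by positivity)
  calc aa c k * (((2 * k : ℕ) : ℝ) * |t ^ (2 * k - 1)|)
      ≤ aa c k * ((2 * (k:ℝ) + 2) ^ 2 * R ^ (2 * k)) := mul_le_mul_of_nonneg_left h3 ha.le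
    _ = aa c k * (2 * (k:ℝ) + 2) ^ 2 * R ^ (2 * k) := by ring

lemma bound3 {c t R : ℝ} (hc : 0 < c) (hR : 1 ≤ R) (ht : |t| ≤ R) (k : ℕ) :
    ‖aa c k * ((2 * k : ℕ) * ((2 * k - 1 : ℕ) * t ^ (2 * k - 2)))‖ ≤ mb c R k := by
  have ha := aa_pos hc k
  rw [Real.norm_eq_abs, abs_mul, abs_of_pos ha, abs_mul, Nat.abs_cast, abs_mul, Nat.abs_cast]
  unfold mb
  have h1 : |t ^ (2 * k - 2)| ≤ R ^ (2 * k) := abs_pow_le hR ht (Nat.sub_le _ _)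
  have h2 : ((2 * k : ℕ) : ℝ) * ((2 * k - 1 : ℕ) : ℝ) ≤ (2 * (k:ℝ) + 2) ^ 2 := by
    have : ((2 * k - 1 : ℕ) : ℝ) ≤ 2 * (k:ℝ) + 2 := by
      have : (2 * k - 1 : ℕ) ≤ 2 * k + 2 := by omega
      calc ((2 * k - 1 : ℕ) : ℝ) ≤ ((2 * k + 2 : ℕ) : ℝ) := by exact_mod_cast this
        _ = 2 * (k:ℝ) + 2 := by push_cast; ring
    have h0 : ((2 * k : ℕ) : ℝ) ≤ 2 * (k:ℝ) + 2 := by push_cast; linarith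
    have hn : (0:ℝ) ≤ ((2 * k : ℕ) : ℝ) := Nat.cast_nonneg _
    calc ((2 * k : ℕ) : ℝ) * ((2 * k - 1 : ℕ) : ℝ) ≤ (2 * (k:ℝ) + 2) * (2 * (k:ℝ) + 2) := by
          apply mul_le_mul h0 this (Nat.cast_nonneg _) (by positivity)
      _ = (2 * (k:ℝ) + 2) ^ 2 := by ring
  have h3 : ((2 * k : ℕ) : ℝ) * (((2 * k - 1 : ℕ) : ℝ) * |t ^ (2 * k - 2)|)
      ≤ (2 * (k:ℝ) + 2) ^ 2 * R ^ (2 * k) := by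
    rw [← mul_assoc]
    apply mul_le_mul h2 h1 (abs_nonneg _) (by positivity)
  calc aa c k * (((2 * k : ℕ) : ℝ) * (((2 * k - 1 : ℕ) : ℝ) * |t ^ (2 * k - 2)|))
      ≤ aa c k * ((2 * (k:ℝ) + 2) ^ 2 * R ^ (2 * k)) := mul_le_mul_of_nonneg_left h3 ha.le
    _ = aa c k * (2 * (k:ℝ) + 2) ^ 2 * R ^ (2 * k) := by ring

lemma summable1 {c : ℝ} (hc : 0 < c) (t : ℝ) : Summable fun k => aa c k * t ^ (2 * k) := by
  have hR : (1:ℝ) ≤ |t| + 1 := by linarith [abs_nonneg t]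
  exact Summable.of_norm_bounded (summable_mb hc hR) (fun k => bound1 hc hR (by linarith) k)

lemma summable2 {c : ℝ} (hc : 0 < c) (t : ℝ) :
    Summable fun k => aa c k * ((2 * k : ℕ) * t ^ (2 * k - 1)) := by
  have hR : (1:ℝ) ≤ |t| + 1 := by linarith [abs_nonneg t]
  exact Summable.of_norm_bounded (summable_mb hc hR) (fun k => bound2 hc hR (by linarith) k)

lemma summable3 {c : ℝ} (hc : 0 < c) (t : ℝ) :
    Summable fun k => aa c k * ((2 * k : ℕ) * ((2 * k - 1 : ℕ) * t ^ (2 * k - 2))) := by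
  have hR : (1:ℝ) ≤ |t| + 1 := by linarith [abs_nonneg t]
  exact Summable.of_norm_bounded (summable_mb hc hR) (fun k => bound3 hc hR (by linarith) k)

lemma hasDerivAt_ff {c : ℝ} (hc : 0 < c) (y : ℝ) : HasDerivAt (ff c) (dd1 c y) y := by
  set R : ℝ := |y| + 1 with hRdef
  have hR : (1:ℝ) ≤ R := by rw [hRdef]; linarith [abs_nonneg y]
  unfold ff dd1
  refine hasDerivAt_tsum_of_isPreconnected
      (g := fun k t => aa c k * t ^ (2 * k))
      (g' := fun k x => aa c k * ((2 * k : ℕ) * x ^ (2 * k - 1)))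
      (t := Set.Ioo (-R) R) (y₀ := 0)
      (summable_mb hc hR) isOpen_Ioo isPreconnected_Ioo ?_ ?_ ?_ ?_ ?_
  · intro k x hx
    exact (hasDerivAt_pow (2 * k) x).const_mul (aa c k)
  · intro k x hx
    have hxR : |x| ≤ R := by
      rw [abs_le]; exact ⟨hx.1.le, hx.2.le⟩
    exact bound2 hc hR hxR k
  · exact Set.mem_Ioo.2 ⟨by linarith, by linarith⟩
  · exact summable1 hc 0
  · rw [Set.mem_Ioo]
    constructor
    · linarith [neg_abs_le y, abs_nonneg y]
    · linarith [le_abs_self y]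

lemma hasDerivAt_dd1 {c : ℝ} (hc : 0 < c) (y : ℝ) : HasDerivAt (dd1 c) (dd2 c y) y := by
  set R : ℝ := |y| + 1 with hRdef
  have hR : (1:ℝ) ≤ R := by rw [hRdef]; linarith [abs_nonneg y]
  unfold dd1 dd2
  refine hasDerivAt_tsum_of_isPreconnected
      (g := fun k t => aa c k * ((2 * k : ℕ) * t ^ (2 * k - 1)))
      (g' := fun k x => aa c k * ((2 * k : ℕ) * ((2 * k - 1 : ℕ) * x ^ (2 * k - 2))))
      (t := Set.Ioo (-R) R) (y₀ := 0)
      (summable_mb hc hR) isOpen_Ioo isPreconnected_Ioo ?_ ?_ ?_ ?_ ?_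
  · intro k x hx
    have h := ((hasDerivAt_pow (2 * k - 1) x).const_mul ((2 * k : ℕ) : ℝ)).const_mul (aa c k)
    have e : 2 * k - 1 - 1 = 2 * k - 2 := by omega
    rw [e] at h
    exact h
  · intro k x hx
    have hxR : |x| ≤ R := by
      rw [abs_le]; exact ⟨hx.1.le, hx.2.le⟩
    exact bound3 hc hR hxR k
  · exact Set.mem_Ioo.2 ⟨by linarith, by linarith⟩
  · exact summable2 hc 0
  · rw [Set.mem_Ioo]
    constructor
    · linarith [neg_abs_le y, abs_nonneg y]
    · linarith [le_abs_self y]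


lemma ff_ge_one {c : ℝ} (hc : 0 < c) (t : ℝ) : 1 ≤ ff c t := by
  have h0 : aa c 0 * t ^ (2 * 0) = 1 := by
    unfold aa; norm_num
  have hle : aa c 0 * t ^ (2 * 0) ≤ ff c t := by
    apply Summable.le_tsum (summable1 hc t) 0
    intro j _
    have : t ^ (2 * j) = (t ^ j) ^ 2 := by rw [← pow_mul, mul_comm]
    rw [this]
    have := aa_pos hc j
    positivity
  linarith

lemma ode {c : ℝ} (hc : 0 < c) {t : ℝ} (ht : 0 < t) :
    dd2 c t + (3 / t) * dd1 c t = c * ff c t := by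
  have ht' : t ≠ 0 := ne_of_gt ht
  -- the combined series
  set g : ℕ → ℝ := fun k =>
    aa c k * ((2 * (k:ℝ)) * ((2 * (k:ℝ) + 2) * t ^ (2 * k - 2))) with hg
  have hptwise : ∀ k, aa c k * ((2 * k : ℕ) * ((2 * k - 1 : ℕ) * t ^ (2 * k - 2)))
      + (3 / t) * (aa c k * ((2 * k : ℕ) * t ^ (2 * k - 1))) = g k := by
    intro k
    cases k with
    | zero => simp [hg]
    | succ n =>
      have e1 : 2 * (n + 1) - 1 = 2 * n + 1 := by omega
      have e2 : 2 * (n + 1) - 2 = 2 * n := by omega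
      have e3 : ((2 * (n + 1) : ℕ) : ℝ) = 2 * (n:ℝ) + 2 := by push_cast; ring
      have e4 : ((2 * (n + 1) - 1 : ℕ) : ℝ) = 2 * (n:ℝ) + 1 := by
        rw [e1]; push_cast; ring
      rw [hg]
      simp only [e1, e2, e3, e4]
      have e5 : ((n:ℝ) + 1) = (((n + 1 : ℕ)):ℝ) := by push_cast; ring
      rw [pow_succ]
      push_cast
      field_simp
      ring
  have hs2 := summable2 hc t
  have hs3 := summable3 hc t
  have hsb := hs2.mul_left (3 / t)
  have hsg : Summable g := by
    apply Summable.congr (hs3.add hsb)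
    intro k
    exact hptwise k
  have step1 : dd2 c t + (3 / t) * dd1 c t = ∑' k, g k := by
    unfold dd2 dd1
    rw [← hs2.tsum_mul_left (3 / t), ← Summable.tsum_add hs3 hsb]
    exact tsum_congr hptwise
  rw [step1]
  rw [Summable.tsum_eq_zero_add hsg]
  have hg0 : g 0 = 0 := by simp [hg]
  have hgsucc : ∀ k : ℕ, g (k + 1) = c * (aa c k * t ^ (2 * k)) := by
    intro k
    have e2 : 2 * (k + 1) - 2 = 2 * k := by omega
    rw [hg]
    simp only [e2]
    push_cast
    calc aa c (k + 1) * ((2 * ((k:ℝ) + 1)) * ((2 * ((k:ℝ) + 1) + 2) * t ^ (2 * k)))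
        = (aa c (k + 1) * (4 * ((k:ℝ) + 1) * ((k:ℝ) + 2))) * t ^ (2 * k) := by ring
      _ = (c * aa c k) * t ^ (2 * k) := by rw [aa_succ]
      _ = c * (aa c k * t ^ (2 * k)) := by ring
  rw [hg0, zero_add]
  calc ∑' k, g (k + 1) = ∑' k, c * (aa c k * t ^ (2 * k)) := tsum_congr hgsucc
    _ = c * ∑' k, aa c k * t ^ (2 * k) := (summable1 hc t).tsum_mul_left c
    _ = c * ff c t := rfl


open Real in
lemma coef_bound {c ν : ℝ} (hc : 0 < c) (hν0 : 0 < ν) (hν : ν ^ 2 < c) :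
    ∀ᶠ k in atTop, ν ^ (2 * k) / ((2 * k).factorial : ℝ) ≤ aa c k := by
  set s : ℝ := ν ^ 2 / c with hs_def
  have hs0 : 0 < s := by positivity
  have hs1 : s < 1 := by rw [hs_def, div_lt_one hc]; exact hν
  have hgeo : Tendsto (fun k : ℕ => ((k:ℝ)) ^ 2 * s ^ k) atTop (𝓝 0) :=
    (summable_pow_mul_geometric_of_norm_lt_one (R := ℝ) 2
      (by rw [Real.norm_eq_abs, abs_of_pos hs0]; exact hs1)).tendsto_atTop_zero
  filter_upwards [hgeo.eventually (gt_mem_nhds (show (0:ℝ) < 1/4 by norm_num)),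
    eventually_ge_atTop 1] with k hk4 hk1
  -- notation
  have hk1' : (1:ℝ) ≤ (k:ℝ) := by exact_mod_cast hk1
  set cb : ℕ := Nat.centralBinom k with hcb_def
  have F1 : ((2 * k).factorial : ℝ) = (cb:ℝ) * (Nat.factorial k) * (Nat.factorial k) := by
    have h := Nat.choose_mul_factorial_mul_factorial (show k ≤ 2 * k by omega)
    have h2 : 2 * k - k = k := by omega
    rw [h2] at h
    have : (cb : ℕ) * Nat.factorial k * Nat.factorial k = (2 * k).factorial := by
      rw [hcb_def, Nat.centralBinom]; exact h
    exact_mod_cast this.symm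
  have F2 : (4:ℝ) ^ k ≤ 2 * (k:ℝ) * (cb:ℝ) := by
    have := Nat.four_pow_le_two_mul_self_mul_centralBinom k hk1
    exact_mod_cast this
  have hsk : (0:ℝ) < s ^ k := by positivity
  have F3 : s ^ k * (2 * (k:ℝ) * ((k:ℝ) + 1)) ≤ 1 := by
    have hint : 0 ≤ s ^ k * (2 * (k:ℝ) * ((k:ℝ) - 1)) := by
      apply mul_nonneg hsk.le
      have : (0:ℝ) ≤ (k:ℝ) - 1 := by linarith
      positivity
    nlinarith [hk4, hsk]
  have hred : s ^ k * 4 ^ k * ((k:ℝ) + 1) ≤ (cb:ℝ) := by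
    have h2k : (0:ℝ) < 2 * (k:ℝ) := by linarith
    apply le_of_mul_le_mul_left _ h2k
    calc 2 * (k:ℝ) * (s ^ k * 4 ^ k * ((k:ℝ) + 1))
        = 4 ^ k * (s ^ k * (2 * (k:ℝ) * ((k:ℝ) + 1))) := by ring
      _ ≤ 4 ^ k * 1 := by
          apply mul_le_mul_of_nonneg_left F3 (by positivity)
      _ = 4 ^ k := mul_one _
      _ ≤ 2 * (k:ℝ) * (cb:ℝ) := F2
  have hν2k : ν ^ (2 * k) = c ^ k * s ^ k := by
    rw [pow_mul, show ν ^ 2 = c * s by rw [hs_def]; field_simp, mul_pow]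
  unfold aa
  rw [div_le_div_iff₀ (by exact_mod_cast Nat.cast_pos.2 (Nat.factorial_pos (2 * k)))
    (by positivity)]
  calc ν ^ (2 * k) * (4 ^ k * (Nat.factorial k : ℝ) * (Nat.factorial (k + 1) : ℝ))
      = (c ^ k * ((Nat.factorial k : ℝ) * (Nat.factorial k : ℝ)))
        * (s ^ k * 4 ^ k * ((k:ℝ) + 1)) := by
        rw [hν2k, Nat.factorial_succ]; push_cast; ring
    _ ≤ (c ^ k * ((Nat.factorial k : ℝ) * (Nat.factorial k : ℝ))) * (cb:ℝ) := by
        apply mul_le_mul_of_nonneg_left hred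
        positivity
    _ = c ^ k * ((2 * k).factorial : ℝ) := by rw [F1]; ring


set_option maxHeartbeats 1000000 in
open Real in
lemma growth {c : ℝ} (hc : 0 < c) {μ : ℝ} (hμ0 : 0 < μ) (hμ : μ ^ 2 < c) :
    Tendsto (fun t => Real.exp (-μ * t) * ff c t) atTop atTop := by
  -- choose intermediate rate ν with μ < ν and ν² < c
  have hsqc : 0 < Real.sqrt c := Real.sqrt_pos.2 hc
  have hμsq : μ < Real.sqrt c := (Real.lt_sqrt hμ0.le).2 hμ
  set ν : ℝ := (μ + Real.sqrt c) / 2 with hν_def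
  have hν1 : μ < ν := by rw [hν_def]; linarith
  have hν0 : 0 < ν := lt_trans hμ0 hν1
  have hνs : ν < Real.sqrt c := by rw [hν_def]; linarith
  have hν2 : ν ^ 2 < c := by
    have := Real.sq_sqrt hc.le
    nlinarith [hν0, hsqc]
  obtain ⟨K, hK⟩ := eventually_atTop.1 (coef_bound hc hν0 hν2)
  -- the finite head of the cosh series
  set P : ℝ → ℝ := fun t => ∑ i ∈ Finset.range K, (ν * t) ^ (2 * i) / ((2 * i).factorial : ℝ)
    with hP_def
  -- lower bound for ff
  have key : ∀ t : ℝ, 0 ≤ t → Real.cosh (ν * t) - P t ≤ ff c t := by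
    intro t ht
    have hsumf := summable1 hc t
    have hcosh_sum : Summable (fun n => (ν * t) ^ (2 * n) / ((2 * n).factorial : ℝ)) :=
      (Real.hasSum_cosh (ν * t)).summable
    have htail_le : (∑' k, aa c (k + K) * t ^ (2 * (k + K))) ≤ ff c t := by
      have hsplit := Summable.sum_add_tsum_nat_add K hsumf
      have hhead : 0 ≤ ∑ i ∈ Finset.range K, aa c i * t ^ (2 * i) := by
        apply Finset.sum_nonneg
        intro i _
        have := aa_pos hc i
        positivity
      unfold ff
      linarith [hsplit]
    have hterm : ∀ k, (ν * t) ^ (2 * (k + K)) / ((2 * (k + K)).factorial : ℝ)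
        ≤ aa c (k + K) * t ^ (2 * (k + K)) := by
      intro k
      have hb := hK (k + K) (by omega)
      have ht2 : (0:ℝ) ≤ t ^ (2 * (k + K)) := by positivity
      calc (ν * t) ^ (2 * (k + K)) / ((2 * (k + K)).factorial : ℝ)
          = (ν ^ (2 * (k + K)) / ((2 * (k + K)).factorial : ℝ)) * t ^ (2 * (k + K)) := by
            rw [mul_pow]; ring
        _ ≤ aa c (k + K) * t ^ (2 * (k + K)) := mul_le_mul_of_nonneg_right hb ht2
    have hcomp : (∑' k, (ν * t) ^ (2 * (k + K)) / ((2 * (k + K)).factorial : ℝ))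
        ≤ ∑' k, aa c (k + K) * t ^ (2 * (k + K)) :=
      Summable.tsum_le_tsum hterm ((summable_nat_add_iff K).2 hcosh_sum)
        ((summable_nat_add_iff K).2 hsumf)
    have hcosh_split := Summable.sum_add_tsum_nat_add K hcosh_sum
    have hcosh_eq : Real.cosh (ν * t) = ∑' n, (ν * t) ^ (2 * n) / ((2 * n).factorial : ℝ) :=
      Real.cosh_eq_tsum (ν * t)
    rw [hP_def]
    simp only
    linarith [hcosh_split, hcomp, htail_le]
  -- the lower-bound function tends to infinity
  have hA : Tendsto (fun t => (1/2) * Real.exp ((ν - μ) * t)) atTop atTop := by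
    apply Tendsto.const_mul_atTop (by norm_num : (0:ℝ) < 1/2)
    exact Real.tendsto_exp_atTop.comp (tendsto_id.const_mul_atTop (by linarith))
  have hB : Tendsto (fun t => Real.exp (-μ * t) * P t) atTop (𝓝 0) := by
    have : (fun t => Real.exp (-μ * t) * P t)
        = fun t => ∑ i ∈ Finset.range K,
            (ν ^ (2 * i) / ((2 * i).factorial : ℝ)) * (t ^ (2 * i) * Real.exp (-μ * t)) := by
      funext t
      rw [hP_def, Finset.mul_sum]
      apply Finset.sum_congr rfl
      intro i _
      rw [mul_pow]
      ring
    rw [this]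
    have h0 : (0:ℝ) = ∑ i ∈ Finset.range K, (0:ℝ) := by simp
    rw [h0]
    apply tendsto_finset_sum
    intro i _
    rw [show (0:ℝ) = (ν ^ (2 * i) / ((2 * i).factorial : ℝ)) * 0 by ring]
    apply Tendsto.const_mul
    have hbase := tendsto_pow_mul_exp_neg_atTop_nhds_zero (2 * i)
    have hcomp : Tendsto (fun t : ℝ => (μ * t) ^ (2 * i) * Real.exp (-(μ * t))) atTop (𝓝 0) :=
      hbase.comp (tendsto_id.const_mul_atTop hμ0)
    have := hcomp.const_mul (μ ^ (2 * i))⁻¹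
    rw [mul_zero] at this
    apply this.congr
    intro t
    have hμne : μ ^ (2 * i) ≠ 0 := by positivity
    rw [mul_pow]
    field_simp
  -- combine
  have hlow : Tendsto (fun t => (1/2) * Real.exp ((ν - μ) * t) - Real.exp (-μ * t) * P t)
      atTop atTop := by
    have hev : ∀ᶠ t in atTop, (-1:ℝ) ≤ -(Real.exp (-μ * t) * P t) := by
      filter_upwards [hB.eventually (gt_mem_nhds (show (0:ℝ) < 1 by norm_num))] with t htt
      linarith
    have := tendsto_atTop_add_left_of_le' atTop (-1:ℝ) hev hA
    apply this.congr
    intro t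
    ring
  apply tendsto_atTop_mono' atTop _ hlow
  filter_upwards [eventually_ge_atTop (0:ℝ)] with t ht
  have h1 := key t ht
  have hexp : (0:ℝ) < Real.exp (-μ * t) := Real.exp_pos _
  have h2 : Real.exp (-μ * t) * (Real.cosh (ν * t) - P t) ≤ Real.exp (-μ * t) * ff c t :=
    mul_le_mul_of_nonneg_left h1 hexp.le
  have h3 : (1/2) * Real.exp ((ν - μ) * t) ≤ Real.exp (-μ * t) * Real.cosh (ν * t) := by
    rw [Real.cosh_eq, show (ν - μ) * t = -μ * t + ν * t by ring, Real.exp_add]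
    nlinarith [Real.exp_pos (-(ν * t)), Real.exp_pos (ν * t), hexp]
  rw [mul_sub] at h2
  linarith

end Stmt8Aux

namespace Stmt8Aux

lemma e2norm_smul {N : ℕ} (s : ℝ) (x : Fin N → ℝ) : e2norm (s • x) = |s| * e2norm x := by
  unfold e2norm
  have h : ∑ i, (s • x) i ^ 2 = s ^ 2 * ∑ i, x i ^ 2 := by
    rw [Finset.mul_sum]
    apply Finset.sum_congr rfl
    intro i _
    rw [Pi.smul_apply, smul_eq_mul, mul_pow]
  rw [h, Real.sqrt_mul (sq_nonneg s), Real.sqrt_sq_eq_abs]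

lemma e2norm_pos {N : ℕ} {x : Fin N → ℝ} (hx : x ≠ 0) : 0 < e2norm x := by
  obtain ⟨i, hi⟩ := Function.ne_iff.1 hx
  have hi' : x i ≠ 0 := hi
  apply Real.sqrt_pos.2
  apply Finset.sum_pos' (fun j _ => sq_nonneg _)
  exact ⟨i, Finset.mem_univ i, by positivity⟩

end Stmt8Aux

open Stmt8Aux

/-- if `G` is symmetric with a real eigenvalue `lam < 0` (eigenvector `u`),
then for every `δ > 0` there is an NAGD trajectory with initial data of size `< δ` whose
Euclidean norm blows up exponentially at rate `√(-lam)`: `e^{-μ' t} ‖q(t)‖₂ → ∞`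
for every `μ' < √(-lam)`. -/
theorem stmt_8 {N : ℕ} (G : Matrix (Fin N) (Fin N) ℝ) (hsymm : G.transpose = G)
    (lam : ℝ) (hlam : lam < 0) (u : Fin N → ℝ) (hu : u ≠ 0)
    (heig : G.mulVec u = lam • u)
    (t₀ : ℝ) (ht₀ : 0 < t₀) :
    ∀ δ : ℝ, 0 < δ → ∃ q v : ℝ → Fin N → ℝ,
      IsNAGDTrajectory G t₀ q v ∧
      e2norm (q t₀) + e2norm (v t₀) < δ ∧
      ∀ μ' : ℝ, μ' < Real.sqrt (-lam) →
        Tendsto (fun t => Real.exp (-μ' * t) * e2norm (q t)) atTop atTop := by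
  intro δ hδ
  have hc : (0:ℝ) < -lam := by linarith
  set c : ℝ := -lam with hc_def
  obtain ⟨nu, hnu_def⟩ : ∃ nu : ℝ, nu = e2norm u := ⟨_, rfl⟩
  have hnu : 0 < nu := hnu_def ▸ e2norm_pos hu
  obtain ⟨A, hA_def⟩ : ∃ A : ℝ, A = |ff c t₀| + |dd1 c t₀| + 1 := ⟨_, rfl⟩
  have hA : 0 < A := by
    have := abs_nonneg (ff c t₀); have := abs_nonneg (dd1 c t₀); rw [hA_def]; linarith
  obtain ⟨ε, hε_def⟩ : ∃ ε : ℝ, ε = δ / (2 * A * (nu + 1)) := ⟨_, rfl⟩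
  have hε : 0 < ε := by rw [hε_def]; positivity
  refine ⟨fun t => (ε * ff c t) • u, fun t => (ε * dd1 c t) • u, ⟨?_, ?_⟩, ?_, ?_⟩
  · intro t _
    exact ((hasDerivAt_ff hc t).const_mul ε).smul_const u
  · intro t htt
    have ht0 : 0 < t := lt_of_lt_of_le ht₀ htt
    have h := ((hasDerivAt_dd1 hc t).const_mul ε).smul_const u
    refine h.congr_deriv ?_
    symm
    have hmv : G.mulVec ((ε * ff c t) • u) = ((ε * ff c t) * lam) • u := by
      rw [Matrix.mulVec_smul, heig, smul_smul]
    rw [hmv, smul_smul, ← sub_smul]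
    congr 1
    have hode := ode hc ht0
    linear_combination (-ε) * hode
  · rw [e2norm_smul, e2norm_smul, abs_mul, abs_mul, abs_of_pos hε, ← hnu_def]
    have h1 : |ff c t₀| + |dd1 c t₀| ≤ A := by rw [hA_def]; linarith
    have h2 : nu ≤ nu + 1 := by linarith
    have h3 : (|ff c t₀| + |dd1 c t₀|) * nu ≤ A * (nu + 1) :=
      mul_le_mul h1 h2 hnu.le hA.le
    have key : ε * |ff c t₀| * nu + ε * |dd1 c t₀| * nu ≤ ε * A * (nu + 1) := by
      calc ε * |ff c t₀| * nu + ε * |dd1 c t₀| * nu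
          = ε * ((|ff c t₀| + |dd1 c t₀|) * nu) := by ring
        _ ≤ ε * (A * (nu + 1)) := mul_le_mul_of_nonneg_left h3 hε.le
        _ = ε * A * (nu + 1) := by ring
    have hval : ε * A * (nu + 1) = δ / 2 := by
      rw [hε_def]
      field_simp
    linarith [key, hval, hδ]
  · intro μ' hμ'
    set μ : ℝ := Real.sqrt c with hμ_def
    have hμpos : 0 < μ := Real.sqrt_pos.2 hc
    set ν₀ : ℝ := max μ' (μ / 2) with hν₀_def
    have hν₀pos : 0 < ν₀ := lt_of_lt_of_le (by linarith) (le_max_right _ _)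
    have hν₀lt : ν₀ < μ := by
      rw [hν₀_def]
      apply max_lt hμ' (by linarith)
    have hν₀sq : ν₀ ^ 2 < c := by
      have hsq : μ ^ 2 = c := Real.sq_sqrt hc.le
      nlinarith
    have hg := growth hc hν₀pos hν₀sq
    have hg2 := hg.const_mul_atTop (show (0:ℝ) < ε * nu from mul_pos hε hnu)
    apply tendsto_atTop_mono' atTop _ hg2
    filter_upwards [eventually_ge_atTop (0:ℝ)] with t ht
    have hffpos : 0 < ff c t := lt_of_lt_of_le one_pos (ff_ge_one hc t)
    have hqnorm : e2norm ((ε * ff c t) • u) = ε * nu * ff c t := by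
      rw [e2norm_smul, abs_mul, abs_of_pos hε, abs_of_pos hffpos, ← hnu_def]
      ring
    have hexple : Real.exp (-ν₀ * t) ≤ Real.exp (-μ' * t) := by
      apply Real.exp_le_exp.2
      have : μ' ≤ ν₀ := le_max_left _ _
      nlinarith
    rw [hqnorm]
    have hfac : 0 < ε * nu * ff c t := by positivity
    calc ε * nu * (Real.exp (-ν₀ * t) * ff c t)
        = Real.exp (-ν₀ * t) * (ε * nu * ff c t) := by ring
      _ ≤ Real.exp (-μ' * t) * (ε * nu * ff c t) :=
          mul_le_mul_of_nonneg_right hexple hfac.le
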